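/- For any constant c ≥ 1.66 and any x ∈ [0,1], the series ∑_{n=0}^∞ (x^{2n}/(2n)!) · γ(x/(2n+1)) is at most exp(c·x²), where γ(t) = 1 + t²/2 + t³/2 + 5t⁴/64 + t⁵/32 + t⁶/256. -/

import Mathlib

noncomputable def gammaPoly (t : ℝ) : ℝ :=
  1 + (1/2) * t^2 + (1/2) * t^3 + (5/64) * t^4 + (1/32) * t^5 + (1/256) * t^6

noncomputable def Dcoef (n : ℕ) : ℝ :=
  (1 / (Nat.factorial (2*n))) * (1 / (2 * (2*n+1)^2) + (157/256) / (2*n+1)^3)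

lemma gammaPoly_le {t : ℝ} (h0 : 0 ≤ t) (h1 : t ≤ 1) :
    gammaPoly t ≤ 1 + t^2/2 + (157/256) * t^3 := by
  unfold gammaPoly
  have h4 : t^4 ≤ t^3 := by nlinarith [mul_nonneg (pow_nonneg h0 3) (sub_nonneg.mpr h1)]
  have h5 : t^5 ≤ t^4 := by nlinarith [mul_nonneg (pow_nonneg h0 4) (sub_nonneg.mpr h1)]
  have h6 : t^6 ≤ t^5 := by nlinarith [mul_nonneg (pow_nonneg h0 5) (sub_nonneg.mpr h1)]
  nlinarith

lemma gammaPoly_nonneg {t : ℝ} (h0 : 0 ≤ t) : 0 ≤ gammaPoly t := by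
  unfold gammaPoly; positivity

lemma fact_two_mul_ge (n : ℕ) : 2^n * n.factorial ≤ (2*n).factorial := by
  induction n with
  | zero => simp
  | succ k ih =>
    have h : 2*(k+1) = (2*k) + 1 + 1 := by ring
    rw [h, Nat.factorial_succ, Nat.factorial_succ]
    calc 2^(k+1) * (k+1).factorial = 2 * (k+1) * (2^k * k.factorial) := by
          rw [Nat.factorial_succ]; ring
      _ ≤ 2*(k+1) * (2*k).factorial := Nat.mul_le_mul_left _ ih
      _ ≤ (2*k+1+1) * ((2*k+1) * (2*k).factorial) :=
          Nat.mul_le_mul (by omega) (Nat.le_mul_of_pos_left _ (by omega))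

lemma fact_ge_geom (n : ℕ) : 2 * 12^n ≤ (2*(n+1)).factorial := by
  induction n with
  | zero => decide
  | succ k ih =>
    have h : 2*(k+1+1) = (2*(k+1)) + 1 + 1 := by ring
    rw [h, Nat.factorial_succ, Nat.factorial_succ]
    calc 2 * 12^(k+1) = 12 * (2 * 12^k) := by ring
      _ ≤ 12 * (2*(k+1)).factorial := Nat.mul_le_mul_left _ ih
      _ = (12 : ℕ) * (2*(k+1)).factorial := rfl
      _ ≤ ((2*(k+1))+1+1) * (((2*(k+1))+1) * (2*(k+1)).factorial) := by
          rw [← mul_assoc]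
          exact Nat.mul_le_mul_right _ (by nlinarith)

theorem series_gamma_le_exp (c : ℝ) (hc : 1.66 ≤ c) (x : ℝ) (hx : x ∈ Set.Icc (0:ℝ) 1) :
    (∑' n : ℕ, x ^ (2 * n) / (Nat.factorial (2 * n)) * gammaPoly (x / (2 * n + 1)))
      ≤ Real.exp (c * x ^ 2) := by
  obtain ⟨hx0, hx1⟩ := hx
  set f : ℕ → ℝ := fun n => x ^ (2 * n) / (Nat.factorial (2 * n)) * gammaPoly (x / (2 * n + 1)) with hf
  set g : ℕ → ℝ := fun n => x ^ (2 * n) / (Nat.factorial (2 * n)) + Dcoef n * x^2 with hg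
  have hN : ∀ n : ℕ, (1:ℝ) ≤ 2*n+1 := by intro n; have : (0:ℝ) ≤ n := n.cast_nonneg; linarith
  have hF : ∀ n : ℕ, (1:ℝ) ≤ (Nat.factorial (2*n) : ℝ) := by
    intro n; exact_mod_cast Nat.one_le_iff_ne_zero.mpr (Nat.factorial_ne_zero _)
  have hx2n : ∀ n : ℕ, x ^ (2*n) ≤ 1 := fun n => pow_le_one₀ hx0 hx1
  -- term bound
  have hterm : ∀ n : ℕ, f n ≤ g n := by
    intro n
    have hN1 := hN n
    have hF1 := hF n
    have ht0 : 0 ≤ x / (2*n+1) := div_nonneg hx0 (by linarith)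
    have ht1 : x / (2*n+1) ≤ 1 := by rw [div_le_one (by linarith)]; linarith
    have hgle := gammaPoly_le ht0 ht1
    have hstep : f n ≤ x ^ (2*n) / (Nat.factorial (2*n)) *
        (1 + (x/(2*n+1))^2/2 + (157/256) * (x/(2*n+1))^3) := by
      apply mul_le_mul_of_nonneg_left hgle
      positivity
    refine hstep.trans ?_
    have hx3 : x^3 ≤ x^2 := by nlinarith [mul_nonneg (mul_nonneg hx0 hx0) (sub_nonneg.mpr hx1)]
    have h3 : x^2/(2*n+1)^2/2 + 157/256 * (x^3/(2*n+1)^3)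
        ≤ x^2/(2*n+1)^2/2 + 157/256 * (x^2/(2*n+1)^3) := by gcongr
    have hkey : x ^ (2*n) * (x^2/(2*n+1)^2/2 + (157/256) * (x^3/(2*n+1)^3))
        ≤ 1 * (x^2/(2*n+1)^2/2 + (157/256) * (x^2/(2*n+1)^3)) :=
      mul_le_mul (hx2n n) h3 (by positivity) zero_le_one
    have expand : x ^ (2*n) / (Nat.factorial (2*n)) *
        (1 + (x/(2*n+1))^2/2 + (157/256) * (x/(2*n+1))^3)
        = x ^ (2*n) / (Nat.factorial (2*n))
          + (1/(Nat.factorial (2*n))) * (x ^ (2*n) * (x^2/(2*n+1)^2/2 + (157/256) * (x^3/(2*n+1)^3))) := by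
      field_simp
      ring
    rw [expand]
    have hfin : (1/(Nat.factorial (2*n):ℝ)) * (x ^ (2*n) * (x^2/(2*n+1)^2/2 + (157/256) * (x^3/(2*n+1)^3)))
        ≤ Dcoef n * x^2 := by
      have h2 := mul_le_mul_of_nonneg_left hkey (by positivity : (0:ℝ) ≤ 1/(Nat.factorial (2*n):ℝ))
      refine h2.trans_eq ?_
      unfold Dcoef
      field_simp
    simp only [hg]
    linarith
  -- cosh-part termwise
  have hcosh_le : ∀ n : ℕ, x ^ (2*n) / (Nat.factorial (2*n)) ≤ (x^2/2)^n / (Nat.factorial n) := by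
    intro n
    have h1 : ((2:ℝ)^n * Nat.factorial n) ≤ (Nat.factorial (2*n) : ℝ) := by
      exact_mod_cast fact_two_mul_ge n
    have h2 : (0:ℝ) < 2^n * Nat.factorial n := by positivity
    calc x ^ (2*n) / (Nat.factorial (2*n)) ≤ x ^ (2*n) / (2^n * Nat.factorial n) := by
          apply div_le_div_of_nonneg_left (pow_nonneg hx0 _) h2 h1
      _ = (x^2/2)^n / (Nat.factorial n) := by
          rw [div_pow, pow_mul]
          ring
  -- Dcoef bounds
  have hD_nonneg : ∀ n : ℕ, 0 ≤ Dcoef n := by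
    intro n; unfold Dcoef; positivity
  have hDsucc : ∀ n : ℕ, Dcoef (n+1) ≤ (541/6912) * ((1/2) * (1/12)^n) := by
    intro n
    have hfge : (2 * 12^n : ℝ) ≤ (Nat.factorial (2*(n+1)) : ℝ) := by
      exact_mod_cast fact_ge_geom n
    have h12 : (0:ℝ) < 12^n := by positivity
    have hFpos : (0:ℝ) < (Nat.factorial (2*(n+1)) : ℝ) := by positivity
    have hfrac : (1 : ℝ) / (Nat.factorial (2*(n+1)) : ℝ) ≤ (1/2) * (1/12)^n := by
      rw [div_le_iff₀ hFpos]
      calc (1:ℝ) = ((1/2) * (1/12)^n) * (2 * 12^n) := by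
            field_simp
            rw [← mul_pow]; norm_num
        _ ≤ _ := by
            apply mul_le_mul_of_nonneg_left hfge (by positivity)
    have hNge : (9:ℝ) ≤ (2*(n+1)+1 : ℝ)^2 := by
      have : (3:ℝ) ≤ 2*(n+1)+1 := by have : (0:ℝ) ≤ n := n.cast_nonneg; push_cast; linarith
      nlinarith
    have hNge3 : (27:ℝ) ≤ (2*(n+1)+1 : ℝ)^3 := by
      have h3 : (3:ℝ) ≤ 2*(n+1)+1 := by have : (0:ℝ) ≤ n := n.cast_nonneg; push_cast; linarith
      nlinarith
    have hbr2 : 1 / (2 * (2*((n:ℝ)+1)+1)^2) + (157/256) / (2*((n:ℝ)+1)+1)^3 ≤ 541/6912 := by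
      have e1 : 1 / (2 * (2*((n:ℝ)+1)+1)^2) ≤ 1/18 := by
        rw [div_le_div_iff₀ (by positivity) (by norm_num)]
        push_cast at hNge; nlinarith
      have e2 : (157/256 : ℝ) / ((2*((n:ℝ)+1)+1))^3 ≤ 157/6912 := by
        rw [div_le_div_iff₀ (by positivity) (by norm_num)]
        push_cast at hNge3; nlinarith
      linarith
    unfold Dcoef
    push_cast
    refine le_trans (mul_le_mul hfrac hbr2 (by positivity) (by positivity)) (le_of_eq (by ring))
  -- summability
  have hsum_geom : Summable (fun n : ℕ => (541/6912 : ℝ) * ((1/2) * (1/12)^n)) :=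
    ((summable_geometric_of_lt_one (by norm_num) (by norm_num)).mul_left _).mul_left _
  have hsumDsucc : Summable (fun n : ℕ => Dcoef (n+1)) :=
    Summable.of_nonneg_of_le (fun n => hD_nonneg _) hDsucc hsum_geom
  have hsumD : Summable Dcoef := (summable_nat_add_iff 1).mp hsumDsucc
  have hsumcosh0 : Summable (fun n : ℕ => (x^2/2)^n / (Nat.factorial n : ℝ)) :=
    Real.summable_pow_div_factorial _
  have hsumcosh : Summable (fun n : ℕ => x ^ (2*n) / (Nat.factorial (2*n) : ℝ)) :=
    Summable.of_nonneg_of_le (fun n => by positivity) hcosh_le hsumcosh0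
  have hsumg : Summable g := hsumcosh.add (hsumD.mul_right _)
  have hf_nonneg : ∀ n, 0 ≤ f n := by
    intro n
    have hN1 := hN n
    have ht0 : 0 ≤ x / (2*n+1) := div_nonneg hx0 (by linarith)
    have := gammaPoly_nonneg ht0
    have : (0:ℝ) ≤ x ^ (2*n) / (Nat.factorial (2*n)) := by positivity
    simp only [hf]
    exact mul_nonneg this (gammaPoly_nonneg ht0)
  have hsumf : Summable f := Summable.of_nonneg_of_le hf_nonneg hterm hsumg
  -- tsum Dcoef bound
  have htsumD : ∑' n, Dcoef n ≤ 29/25 := by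
    rw [Summable.tsum_eq_zero_add hsumD]
    have h0 : Dcoef 0 = 285/256 := by unfold Dcoef; norm_num
    have htail : ∑' n, Dcoef (n+1) ≤ ∑' n : ℕ, (541/6912 : ℝ) * ((1/2) * (1/12)^n) :=
      Summable.tsum_le_tsum hDsucc hsumDsucc hsum_geom
    have hgeo : ∑' n : ℕ, (541/6912 : ℝ) * ((1/2) * (1/12)^n) = 541/12672 := by
      rw [tsum_mul_left, tsum_mul_left, tsum_geometric_of_lt_one (by norm_num) (by norm_num)]
      norm_num
    rw [h0]
    rw [hgeo] at htail
    linarith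
  -- cosh tsum bound
  have htsumcosh : ∑' n : ℕ, x ^ (2*n) / (Nat.factorial (2*n) : ℝ) ≤ Real.exp (x^2/2) := by
    have := Summable.tsum_le_tsum hcosh_le hsumcosh hsumcosh0
    refine this.trans_eq ?_
    rw [Real.exp_eq_exp_ℝ, NormedSpace.exp_eq_tsum_div]
  -- put it together
  have hmain : ∑' n, f n ≤ Real.exp (x^2/2) + (29/25) * x^2 := by
    have h1 : ∑' n, f n ≤ ∑' n, g n := Summable.tsum_le_tsum hterm hsumf hsumg
    have h2 : ∑' n, g n = (∑' n : ℕ, x ^ (2*n) / (Nat.factorial (2*n) : ℝ)) + (∑' n, Dcoef n) * x^2 := by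
      simp only [hg]
      rw [Summable.tsum_add hsumcosh (hsumD.mul_right _), tsum_mul_right]
    have hx2 : (0:ℝ) ≤ x^2 := sq_nonneg x
    have h3 : (∑' n, Dcoef n) * x^2 ≤ (29/25) * x^2 :=
      mul_le_mul_of_nonneg_right htsumD hx2
    calc ∑' n, f n ≤ ∑' n, g n := h1
      _ = _ := h2
      _ ≤ Real.exp (x^2/2) + (29/25) * x^2 := by linarith
  refine hmain.trans ?_
  have hx2 : (0:ℝ) ≤ x^2 := sq_nonneg x
  have h166 : (1.66:ℝ) = 83/50 := by norm_num
  have hA : Real.exp (x^2/2) + (29/25)*x^2 ≤ Real.exp (1.66 * x^2) := by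
    rw [h166]
    have e1 : Real.exp (83/50 * x^2) = Real.exp (x^2/2) * Real.exp ((29/25) * x^2) := by
      rw [← Real.exp_add]; congr 1; ring
    have e2 : (1:ℝ) + (29/25)*x^2 ≤ Real.exp ((29/25) * x^2) := by
      have := Real.add_one_le_exp ((29/25) * x^2); linarith
    have e3 : (1:ℝ) ≤ Real.exp (x^2/2) := Real.one_le_exp (by positivity)
    have e4 := mul_le_mul_of_nonneg_left e2 (Real.exp_pos (x^2/2)).le
    rw [e1]
    have h5 : (1:ℝ) * ((29/25)*x^2) ≤ Real.exp (x^2/2) * ((29/25)*x^2) :=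
      mul_le_mul_of_nonneg_right e3 (by positivity)
    linarith [e4, h5]
  refine hA.trans ?_
  apply Real.exp_le_exp.mpr
  exact mul_le_mul_of_nonneg_right hc hx2
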